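/- Let λ be a Young diagram contained in the t × (n−t+1) rectangle and let m ≥ 1 with λ_m ≥ m, so that the m-th diagonal hook H_m of λ exists: H_m consists of the boxes (m,j) with m ≤ j ≤ λ_m together with the boxes (i,m) with i > m and λ_i ≥ m. Write a := λ_m − m + 1 (arm) and b := #{i > m : λ_i ≥ m} (leg). Then Σ_{(i,j)∈H_m} α_{t−i+j} = α_{t−b} + α_{t−b+1} + ⋯ + α_{t+a−1} = e_{t−b} − e_{t+a} in ℤ^{n+1}. In particular, the weight of every diagonal hook of λ is a positive root of type A_n. -/
import Mathlib


namespace Stmt9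

/-- Standard basis vector `e_k` (1-indexed) of `ℤ^{n+1}`. -/
def E (n k : ℕ) : Fin (n + 1) → ℤ := fun x => if (x : ℕ) + 1 = k then 1 else 0

/-- Simple root `α_r = e_r - e_{r+1}` of type `A_n` (1-indexed). -/
def alpha (n r : ℕ) : Fin (n + 1) → ℤ := E n r - E n (r + 1)

/-- Let `λ` be a Young diagram contained in the `t × (n-t+1)` rectangle (`l i` is the
`i`-th part, `1`-indexed) and `m ≥ 1` with `λ_m ≥ m`.  The `m`-th diagonal hook `H_m`
consists of the boxes `(m, j)`, `m ≤ j ≤ λ_m`, together with the boxes `(i, m)`, `i > m`,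
`λ_i ≥ m`; the box `(i,j)` has residue `t - i + j`.  With arm `a = λ_m - m + 1` and leg
`b = #{i > m : λ_i ≥ m}`, the weight of the hook equals
`α_{t-b} + α_{t-b+1} + ⋯ + α_{t+a-1} = e_{t-b} - e_{t+a}`; in particular it is a
positive root of type `A_n` (i.e. `1 ≤ t - b` and `t + a ≤ n + 1`). -/
theorem stmt9 (n t : ℕ) (hn : 1 ≤ n) (ht1 : 1 ≤ t) (htn : t ≤ n)
    (l : ℕ → ℕ)
    (hmono : ∀ i j, 1 ≤ i → i ≤ j → l j ≤ l i)
    (hbd : ∀ i, l i ≤ n - t + 1)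
    (hzero : ∀ i, t < i → l i = 0)
    (m : ℕ) (hm : 1 ≤ m) (hml : m ≤ l m) :
    ((∑ j ∈ Finset.Icc m (l m), alpha n (t + j - m)) +
        ∑ i ∈ (Finset.Ioc m t).filter (fun i => m ≤ l i), alpha n (t + m - i)) =
      E n (t - ((Finset.Ioc m t).filter (fun i => m ≤ l i)).card) -
        E n (t + (l m - m + 1)) ∧
    1 ≤ t - ((Finset.Ioc m t).filter (fun i => m ≤ l i)).card ∧
    t + (l m - m + 1) ≤ n + 1 := by
  classical
  set S : Finset ℕ := (Finset.Ioc m t).filter (fun i => m ≤ l i) with hS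
  set b : ℕ := S.card with hb
  -- m ≤ t
  have hmt : m ≤ t := by
    by_contra h
    have := hzero m (by omega)
    omega
  -- b ≤ t - m
  have hble : b ≤ t - m := by
    have := Finset.card_le_card (Finset.filter_subset (fun i => m ≤ l i) (Finset.Ioc m t))
    simpa [Nat.card_Ioc] using this
  -- S is the interval Ioc m (m + b)
  have hSeq : S = Finset.Ioc m (m + b) := by
    ext i
    simp only [hS, Finset.mem_filter, Finset.mem_Ioc]
    constructor
    · rintro ⟨⟨h1, h2⟩, h3⟩
      refine ⟨h1, ?_⟩
      have hsub : Finset.Ioc m i ⊆ S := by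
        intro j hj
        simp only [Finset.mem_Ioc] at hj
        simp only [hS, Finset.mem_filter, Finset.mem_Ioc]
        exact ⟨⟨hj.1, le_trans hj.2 h2⟩, le_trans h3 (hmono j i (by omega) hj.2)⟩
      have := Finset.card_le_card hsub
      simp only [Nat.card_Ioc] at this
      omega
    · rintro ⟨h1, h2⟩
      have hit : i ≤ t := by omega
      refine ⟨⟨h1, hit⟩, ?_⟩
      by_contra hli
      push_neg at hli
      have hsub : S ⊆ Finset.Ioc m (i - 1) := by
        intro j hj
        simp only [hS, Finset.mem_filter, Finset.mem_Ioc] at hj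
        simp only [Finset.mem_Ioc]
        refine ⟨hj.1.1, ?_⟩
        by_contra hji
        push_neg at hji
        have := hmono i j (by omega) (by omega)
        omega
      have := Finset.card_le_card hsub
      simp only [Nat.card_Ioc] at this
      omega
  -- first (arm) telescoping sum
  have arm : ∀ c : ℕ, ∑ j ∈ Finset.Icc m (m + c), alpha n (t + j - m)
      = E n t - E n (t + c + 1) := by
    intro c
    induction c with
    | zero =>
      simp only [Nat.add_zero, Finset.Icc_self, Finset.sum_singleton]
      have : t + m - m = t := by omega
      rw [this, alpha]
    | succ c ih =>
      rw [show m + (c + 1) = (m + c) + 1 by omega,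
        Finset.sum_Icc_succ_top (by omega)]
      rw [ih]
      have h1 : t + (m + c + 1) - m = t + c + 1 := by omega
      rw [h1, alpha, show t + (c + 1) + 1 = t + c + 1 + 1 from by omega]
      abel
  -- second (leg) telescoping sum
  have leg : ∀ c : ℕ, m + c ≤ t → ∑ i ∈ Finset.Ioc m (m + c), alpha n (t + m - i)
      = E n (t - c) - E n t := by
    intro c
    induction c with
    | zero => simp
    | succ c ih =>
      intro hc
      rw [show m + (c + 1) = (m + c) + 1 by omega,
        Finset.sum_Ioc_succ_top (by omega), ih (by omega)]
      have h1 : t + m - (m + c + 1) = t - (c + 1) := by omega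
      rw [h1, alpha]
      have h2 : t - (c + 1) + 1 = t - c := by omega
      rw [h2]
      abel
  have harm := arm (l m - m)
  rw [show m + (l m - m) = l m by omega] at harm
  have hleg := leg b (by omega)
  rw [hSeq, harm, hleg]
  refine ⟨?_, by omega, ?_⟩
  · have : t + (l m - m) + 1 = t + (l m - m + 1) := by omega
    rw [this]; abel
  · have := hbd m
    omega

end Stmt9
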